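/- arXiv:0706.1009 — 2 statements merged into one kernel-verified Lean document; each statement's English description precedes it below -/
import Mathlib

section
/- For all nonnegative integers a_0, a_1, …, a_n, the ℚ(q)-algebra endomorphism π of the Laurent polynomial ring ℚ(q)[x_0^{±1}, …, x_n^{±1}] determined by x_0 ↦ x_1, x_1 ↦ x_2, …, x_{n−1} ↦ x_n, x_n ↦ x_0/q satisfies π( D_n(x, (a_0, a_1, …, a_n), q) ) = D_n(x, (a_n, a_0, a_1, …, a_{n−1}), q). -/
/- π (Dₙ(x,(a₀,…,aₙ),q)) = Dₙ(x,(aₙ,a₀,…,a_{n-1}),q). -/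
/- Zeilberger–Bressoud q-Dyson Theorem.
Work over `K = ℚ(q)`.  Laurent polynomials in the variables `x₀, x₁, …, xₙ` are
modelled as the add-monoid algebra of `K` over exponent vectors `ℕ →₀ ℤ`
(only the variables `x₀, …, xₙ` actually occur in the q-Dyson product).
`CT` takes the coefficient of the zero exponent vector, i.e. the constant term. -/

open Finset

noncomputable section

abbrev K : Type := RatFunc ℚ

/-- Laurent polynomials (in the variables `x i`, `i : ℕ`) over `ℚ(q)`. -/
abbrev LP : Type := AddMonoidAlgebra K (ℕ →₀ ℤ)

/-- the indeterminate `q`. -/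
def q : K := RatFunc.X

/-- the Laurent monomial `(x i) ^ e`. -/
def Xp (i : ℕ) (e : ℤ) : LP := AddMonoidAlgebra.single (Finsupp.single i e) 1

/-- the constant term (coefficient of `x₀^0 x₁^0 ⋯`). -/
def CT (F : LP) : K := F.coeff 0

/-- scalars embedded in the Laurent polynomial ring. -/
def Cq : K →+* LP := algebraMap K LP

/-- the q-shifted factorial `(z)_k = (1-z)(1-zq)⋯(1-zq^{k-1})` for a Laurent polynomial `z`. -/
def poch (z : LP) (k : ℕ) : LP := ∏ t ∈ range k, (1 - Cq (q ^ t) * z)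

/-- `(q)_k = (1-q)(1-q²)⋯(1-q^k)`. -/
def qfac (k : ℕ) : K := ∏ t ∈ range k, (1 - q ^ (t + 1))

/-- the q-Dyson product `Dₙ(x, a, q) = ∏_{0 ≤ i < j ≤ n} (x_i/x_j)_{a_i} (q x_j/x_i)_{a_j}`. -/
def Dn (n : ℕ) (a : ℕ → ℕ) : LP :=
  ∏ ij ∈ ((range (n+1)) ×ˢ (range (n+1))).filter (fun ij => ij.1 < ij.2),
    poch (Xp ij.1 1 * Xp ij.2 (-1)) (a ij.1) *
      poch (Cq q * (Xp ij.2 1 * Xp ij.1 (-1))) (a ij.2)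

lemma Xp_mul (i : ℕ) (e f : ℤ) : Xp i e * Xp i f = Xp i (e + f) := by
  simp [Xp, AddMonoidAlgebra.single_mul_single, ← Finsupp.single_add]

lemma Xp_zero (i : ℕ) : Xp i 0 = 1 := by
  simp [Xp, AddMonoidAlgebra.one_def]

lemma Xp_inv_mul (i : ℕ) : Xp i 1 * Xp i (-1) = 1 := by
  rw [Xp_mul]; norm_num [Xp_zero]

lemma q_ne_zero : q ≠ 0 := RatFunc.X_ne_zero

lemma pi_inv (π : LP →ₐ[K] LP) {u v w w' : LP}
    (h1 : u * v = 1) (h2 : π u = w) (h3 : w * w' = 1) : π v = w' := by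
  have h4 : π u * π v = 1 := by rw [← map_mul, h1, map_one]
  have h5 : w' = w' * (π u * π v) := by rw [h4, mul_one]
  rw [h5, h2, ← mul_assoc, mul_comm w' w, h3, one_mul]

lemma map_poch (π : LP →ₐ[K] LP) (z : LP) (k : ℕ) :
    π (poch z k) = poch (π z) k := by
  simp only [poch, map_prod, map_sub, map_mul, map_one, Cq, AlgHom.commutes]

/-- The `ℚ(q)`-algebra endomorphism `π` of the Laurent polynomial ring
determined by `x₀ ↦ x₁, x₁ ↦ x₂, …, x_{n-1} ↦ xₙ, xₙ ↦ x₀/q` satisfies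
`π (Dₙ(x,(a₀,a₁,…,aₙ),q)) = Dₙ(x,(aₙ,a₀,a₁,…,a_{n-1}),q)`. -/
theorem pi_Dn (n : ℕ) (a : ℕ → ℕ)
    (π : LP →ₐ[K] LP)
    (hπ : ∀ k, k < n → π (Xp k 1) = Xp (k+1) 1)
    (hπn : π (Xp n 1) = Cq q⁻¹ * Xp 0 1) :
    π (Dn n a) = Dn n (fun k => if k = 0 then a n else a (k-1)) := by
  have hqq : Cq q * Cq q⁻¹ = 1 := by
    rw [← map_mul, mul_inv_cancel₀ q_ne_zero, map_one]
  have hXinv : ∀ k, k < n → π (Xp k (-1)) = Xp (k+1) (-1) := fun k hk =>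
    pi_inv π (Xp_inv_mul k) (hπ k hk) (Xp_inv_mul (k+1))
  have hXninv : π (Xp n (-1)) = Cq q * Xp 0 (-1) := by
    refine pi_inv π (Xp_inv_mul n) hπn ?_
    calc (Cq q⁻¹ * Xp 0 1) * (Cq q * Xp 0 (-1))
        = (Cq q * Cq q⁻¹) * (Xp 0 1 * Xp 0 (-1)) := by ring
      _ = 1 := by rw [hqq, Xp_inv_mul, mul_one]
  rw [Dn, map_prod, Dn]
  refine Finset.prod_nbij'
    (fun ij => if ij.2 = n then (0, ij.1 + 1) else (ij.1 + 1, ij.2 + 1))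
    (fun ij => if ij.1 = 0 then (ij.2 - 1, n) else (ij.1 - 1, ij.2 - 1))
    ?_ ?_ ?_ ?_ ?_
  · rintro ⟨i, j⟩ hij
    simp only [mem_filter, mem_product, mem_range] at hij ⊢
    split <;> simp <;> omega
  · rintro ⟨i, j⟩ hij
    simp only [mem_filter, mem_product, mem_range] at hij ⊢
    split <;> simp <;> omega
  · rintro ⟨i, j⟩ hij
    simp only [mem_filter, mem_product, mem_range] at hij
    by_cases h : j = n <;> simp [h, Prod.ext_iff] <;> omega
  · rintro ⟨i, j⟩ hij
    simp only [mem_filter, mem_product, mem_range] at hij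
    by_cases h : i = 0
    · simp [h, Prod.ext_iff] <;> omega
    · have h2 : ¬ (j - 1 = n) := by omega
      simp [h, h2, Prod.ext_iff] <;> omega
  · rintro ⟨i, j⟩ hij
    simp only [mem_filter, mem_product, mem_range] at hij
    obtain ⟨⟨hi, hj⟩, hlt⟩ := hij
    by_cases h : j = n
    · have hin : i < n := by omega
      simp only [if_pos h]
      rw [h, map_mul, map_poch, map_poch, map_mul, hπ i hin, hXninv, map_mul, map_mul,
        hπn, hXinv i hin]
      have hCq : π (Cq q) = Cq q := π.commutes q
      rw [hCq]
      have e1 : Xp (i+1) 1 * (Cq q * Xp 0 (-1)) = Cq q * (Xp (i+1) 1 * Xp 0 (-1)) := by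
        ring
      have e2 : Cq q * (Cq q⁻¹ * Xp 0 1 * Xp (i+1) (-1)) = Xp 0 1 * Xp (i+1) (-1) := by
        calc Cq q * (Cq q⁻¹ * Xp 0 1 * Xp (i+1) (-1))
            = (Cq q * Cq q⁻¹) * (Xp 0 1 * Xp (i+1) (-1)) := by ring
          _ = Xp 0 1 * Xp (i+1) (-1) := by rw [hqq, one_mul]
      rw [e1, e2]
      simp only [if_pos rfl, Nat.add_sub_cancel]
      rw [mul_comm]
      simp
    · simp only [if_neg h]
      have hjn : j < n := by omega
      have hin : i < n := by omega
      rw [map_mul, map_poch, map_poch, map_mul, hπ i hin, hXinv j hjn, map_mul, map_mul,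
        hπ j hjn, hXinv i hin]
      have hCq : π (Cq q) = Cq q := π.commutes q
      rw [hCq]
      first
      | rfl
      | simp only [Nat.succ_ne_zero, if_false, Nat.add_sub_cancel]
      | simp

end
end

section
/- For n ≥ 1 and nonnegative integers w_1, …, w_n, with w = w_1 + ⋯ + w_n, the following identity holds in ℚ(q): ∏_{l=1}^{n} [ (q^{−Σ_{i=l}^{n} w_i})_{w_l} / ( (q)_{Σ_{i=l}^{n} w_i} · (q^{−Σ_{i=1}^{l−1} w_i})_{Σ_{i=1}^{l−1} w_i} ) ] · ∏_{1 ≤ i < j ≤ n} (q^{−Σ_{l=i}^{j−1} w_l})_{w_i} (q^{Σ_{l=i}^{j−1} w_l + 1})_{w_j} = (−1)^{w} q^{−(w+1 choose 2)} (q)_w / ((q)_{w_1} ⋯ (q)_{w_n}). -/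
/- Lemma 5.1: a q-factorial product identity in ℚ(q). -/

open Finset

noncomputable section

/-- the q-shifted factorial `(z)_k = ∏_{i=0}^{k-1} (1 - z qⁱ)` in `ℚ(q)`. -/
def pochK (z : K) (k : ℕ) : K := ∏ t ∈ range k, (1 - z * q ^ t)

lemma qpow_ne_one (k : ℕ) : q ^ (k+1) ≠ (1:K) := by
  intro h
  have : (Polynomial.X : Polynomial ℚ) ^ (k+1) = 1 := by
    apply IsFractionRing.injective (Polynomial ℚ) K
    simpa [q, map_pow, RatFunc.algebraMap_X, map_one] using h
  have := congrArg Polynomial.natDegree this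
  simp [Polynomial.natDegree_X_pow] at this
lemma one_sub_qpow_ne (k : ℕ) : (1:K) - q ^ (k+1) ≠ 0 := by
  intro h; exact qpow_ne_one k (by linear_combination -h)
lemma qfac_ne_zero (k : ℕ) : qfac k ≠ 0 :=
  Finset.prod_ne_zero_iff.mpr (fun t _ => by have := one_sub_qpow_ne t; simpa using this)
lemma qfac_succ (k : ℕ) : qfac (k+1) = qfac k * (1 - q ^ (k+1)) := by
  simp [qfac, Finset.prod_range_succ]
lemma pochK_succ (z : K) (k : ℕ) : pochK z (k+1) = pochK z k * (1 - z * q ^ k) := by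
  simp [pochK, Finset.prod_range_succ]
lemma pochK_zero (z : K) : pochK z 0 = 1 := by simp [pochK]

lemma choose_two_succ (m : ℕ) : ((m+1).choose 2 : ℤ) = m.choose 2 + m := by
  have : (m+1).choose 2 = m.choose 1 + m.choose 2 := Nat.choose_succ_succ m 1
  rw [this]; push_cast [Nat.choose_one_right]; ring

lemma choose_two_add (a b : ℕ) : ((a+b).choose 2 : ℤ) = a.choose 2 + b.choose 2 + a*b := by
  induction b with
  | zero => simp
  | succ b ih =>
    have h1 : a + (b+1) = (a+b) + 1 := by ring
    rw [h1, choose_two_succ, ih, choose_two_succ]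
    push_cast; ring

lemma pochA' {k m : ℕ} (h : k ≤ m) :
    pochK (q ^ (-(m:ℤ))) k * qfac (m - k) = (-1:K)^k * q ^ ((k.choose 2 : ℤ) - k * m) * qfac m := by
  induction k with
  | zero => simp [pochK_zero]
  | succ k ih =>
    have hk : k ≤ m := Nat.le_of_succ_le h
    have hsub : m - k = (m - (k+1)) + 1 := by omega
    have e1 : q ^ (-(m:ℤ)) * q ^ k = q ^ ((k:ℤ) - m) := by
      rw [← zpow_natCast q k, ← zpow_add₀ q_ne_zero]; ring_nf
    have e2 : (1 : K) - q ^ ((k:ℤ) - m) = -q ^ ((k:ℤ) - m) * (1 - q ^ ((m - (k+1)) + 1)) := by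
      have h0 : (q : K) ^ ((k:ℤ) - m) * q ^ (((m - (k+1)) + 1 : ℕ) : ℤ) = 1 := by
        rw [← zpow_add₀ q_ne_zero]
        have : (k:ℤ) - m + (((m - (k+1)) + 1 : ℕ) : ℤ) = 0 := by push_cast; omega
        rw [this, zpow_zero]
      rw [← zpow_natCast q ((m - (k+1)) + 1)]
      linear_combination -h0
    have e3 : q ^ ((k.choose 2 : ℤ) - k * m) * q ^ ((k:ℤ) - m)
        = q ^ (((k+1 : ℕ).choose 2 : ℤ) - (k+1) * m) := by
      rw [← zpow_add₀ q_ne_zero]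
      congr 1
      rw [choose_two_succ]; push_cast; ring
    calc pochK (q ^ (-(m:ℤ))) (k+1) * qfac (m - (k+1))
        = pochK (q ^ (-(m:ℤ))) k * (1 - q ^ ((k:ℤ) - m)) * qfac (m - (k+1)) := by
          rw [pochK_succ, e1]
      _ = pochK (q ^ (-(m:ℤ))) k * qfac (m - k) * (-q ^ ((k:ℤ) - m)) := by
          rw [e2, hsub, qfac_succ]; ring
      _ = (-1:K)^k * q ^ ((k.choose 2 : ℤ) - k * m) * qfac m * (-q ^ ((k:ℤ) - m)) := by
          rw [ih hk]
      _ = (-1:K)^(k+1) * (q ^ ((k.choose 2 : ℤ) - k * m) * q ^ ((k:ℤ) - m)) * qfac m := by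
          ring
      _ = _ := by rw [e3]; push_cast; ring_nf

lemma pochA {k m : ℕ} (h : k ≤ m) :
    pochK (q ^ (-(m:ℤ))) k = (-1:K)^k * q ^ ((k.choose 2 : ℤ) - k * m) * qfac m / qfac (m - k) := by
  rw [eq_div_iff (qfac_ne_zero _)]
  exact pochA' h

lemma pochA_ne_zero {k m : ℕ} (h : k ≤ m) : pochK (q ^ (-(m:ℤ))) k ≠ 0 := by
  rw [pochA h]
  apply div_ne_zero _ (qfac_ne_zero _)
  apply mul_ne_zero (mul_ne_zero _ _) (qfac_ne_zero _)
  · exact pow_ne_zero _ (by norm_num)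
  · exact zpow_ne_zero _ q_ne_zero

lemma pochB (m k : ℕ) : pochK (q ^ (m+1)) k = qfac (m+k) / qfac m := by
  induction k with
  | zero => simp [pochK_zero, div_self (qfac_ne_zero m)]
  | succ k ih =>
    rw [pochK_succ, ih]
    have h1 : q ^ (m+1) * q ^ k = q ^ ((m+k)+1) := by rw [← pow_add]; ring_nf
    rw [h1, show m + (k+1) = (m+k)+1 by omega, qfac_succ]
    field_simp

lemma two_mul_choose_two (m : ℕ) : ((m.choose 2 : ℤ)) * 2 = m * m - m := by
  induction m with
  | zero => simp
  | succ m ih => rw [choose_two_succ]; push_cast; linear_combination ih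

lemma qfac_zero : qfac 0 = 1 := by simp [qfac]

lemma sum_Icc_split {w : ℕ → ℕ} {i n : ℕ} (h : i ≤ n) :
    ∑ t ∈ Icc i n, w t = w i + ∑ t ∈ Icc (i+1) n, w t := by
  have hset : Icc i n = insert i (Icc (i+1) n) := by
    ext x; simp only [mem_Icc, mem_insert]; omega
  rw [hset, Finset.sum_insert (by simp only [mem_Icc]; omega)]

lemma le_sum_Icc {w : ℕ → ℕ} {i n : ℕ} (h : i ≤ n) : w i ≤ ∑ t ∈ Icc i n, w t :=
  Finset.single_le_sum (f := w) (fun _ _ => Nat.zero_le _) (by simp [mem_Icc, h])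

lemma expsum (w : ℕ → ℕ) (n : ℕ) :
    ∑ i ∈ Icc 1 n, (((w i).choose 2 : ℤ) - (w i : ℤ) * ∑ t ∈ Icc i n, w t)
      = ((∑ t ∈ Icc 1 n, w t).choose 2 : ℤ) - (∑ t ∈ Icc 1 n, w t : ℤ)^2 := by
  induction n with
  | zero => simp
  | succ n ih =>
    rw [Finset.sum_Icc_succ_top (by omega : 1 ≤ n+1),
        Finset.sum_Icc_succ_top (by omega : 1 ≤ n+1)]
    have h1 : ∀ i ∈ Icc 1 n, (((w i).choose 2 : ℤ) - (w i : ℤ) * ∑ t ∈ Icc i (n+1), w t)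
        = (((w i).choose 2 : ℤ) - (w i : ℤ) * ∑ t ∈ Icc i n, w t) - (w i : ℤ) * w (n+1) := by
      intro i hi
      rw [Finset.sum_Icc_succ_top (by simp at hi; omega : i ≤ n+1)]
      push_cast; ring
    rw [Finset.sum_congr rfl h1, Finset.sum_sub_distrib, ih, ← Finset.sum_mul]
    rw [show Icc (n+1) (n+1) = {n+1} from Finset.Icc_self _, Finset.sum_singleton]
    rw [choose_two_add,
        Finset.sum_Icc_succ_top (f := fun t => (w t : ℤ)) (by omega : 1 ≤ n+1)]
    push_cast
    ring

lemma prod_poch_suffix (w : ℕ → ℕ) (N : ℕ) : ∀ n, n ≤ N →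
    ∏ i ∈ Icc 1 n, pochK (q ^ (-(∑ t ∈ Icc i N, w t : ℤ))) (w i)
      = (-1:K) ^ (∑ i ∈ Icc 1 n, w i)
        * q ^ (∑ i ∈ Icc 1 n, (((w i).choose 2 : ℤ) - (w i : ℤ) * ∑ t ∈ Icc i N, w t))
        * qfac (∑ t ∈ Icc 1 N, w t) / qfac (∑ t ∈ Icc (n+1) N, w t) := by
  intro n
  induction n with
  | zero => simp [div_self (qfac_ne_zero _)]
  | succ n ih =>
    intro h
    have hn : n ≤ N := by omega
    rw [Finset.prod_Icc_succ_top (by omega : 1 ≤ n+1),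
        Finset.sum_Icc_succ_top (by omega : 1 ≤ n+1),
        Finset.sum_Icc_succ_top (f := fun i => (((w i).choose 2 : ℤ) - (w i : ℤ) * ∑ t ∈ Icc i N, w t)) (by omega : 1 ≤ n+1),
        ih hn]
    have hk : w (n+1) ≤ ∑ t ∈ Icc (n+1) N, w t := le_sum_Icc h
    have hsplit : ∑ t ∈ Icc (n+1) N, w t = w (n+1) + ∑ t ∈ Icc (n+2) N, w t := sum_Icc_split h
    have hmk : (∑ t ∈ Icc (n+1) N, w t) - w (n+1) = ∑ t ∈ Icc (n+2) N, w t := by omega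
    have hc : (∑ t ∈ Icc (n+1) N, (w t:ℤ)) = ((∑ t ∈ Icc (n+1) N, w t : ℕ) : ℤ) := by
      push_cast; rfl
    rw [hc, pochA hk, hmk]
    have e : ∀ t : ℤ, (q:K) ^ (∑ i ∈ Icc 1 n, (((w i).choose 2 : ℤ) - (w i : ℤ) * ∑ t ∈ Icc i N, w t) + t)
        = q ^ (∑ i ∈ Icc 1 n, (((w i).choose 2 : ℤ) - (w i : ℤ) * ∑ t ∈ Icc i N, w t)) * q ^ t :=
      fun t => zpow_add₀ q_ne_zero _ _
    rw [e]
    push_cast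
    rw [pow_add]
    field_simp [qfac_ne_zero]

lemma cast_sum_Icc (w : ℕ → ℕ) (a b : ℕ) :
    (∑ t ∈ Icc a b, (w t : ℤ)) = ((∑ t ∈ Icc a b, w t : ℕ) : ℤ) := by push_cast; rfl

lemma fieldaux1 (s e2 e3 Fm Fmu F3 F3u D : K) (h1 : Fm ≠ 0) (h2 : Fmu ≠ 0) (h3 : F3 ≠ 0)
    (hD : D ≠ 0) :
    (s * (e2 * e3) * Fmu / F3u) / (Fmu * D) = (s * e2 * Fm / F3) / (Fm * D) * (e3 * F3 / F3u) := by
  have c1 : Fmu * Fmu⁻¹ = 1 := mul_inv_cancel₀ h2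
  have c2 : Fm * Fm⁻¹ = 1 := mul_inv_cancel₀ h1
  have c3 : F3 * F3⁻¹ = 1 := mul_inv_cancel₀ h3
  have X : K := 0
  linear_combination (s*e2*e3*F3u⁻¹*D⁻¹)*c1 - (s*e2*e3*F3u⁻¹*D⁻¹*F3*F3⁻¹)*c2
    - (s*e2*e3*F3u⁻¹*D⁻¹)*c3

lemma fieldaux2 (s e2 e3 Fm Fmu F3 F3u : K) (h1 : Fm ≠ 0) (h3 : F3 ≠ 0) (h3u : F3u ≠ 0) :
    (e3 * F3 / F3u) * ((s * e2 * Fm / F3) * (Fmu / Fm)) = s * (e2 * e3) * Fmu / F3u := by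
  have c2 : Fm * Fm⁻¹ = 1 := mul_inv_cancel₀ h1
  have c3 : F3 * F3⁻¹ = 1 := mul_inv_cancel₀ h3
  linear_combination (s*e2*e3*Fmu*F3u⁻¹*F3*F3⁻¹)*c2 + (s*e2*e3*Fmu*F3u⁻¹)*c3

lemma step_term (w : ℕ → ℕ) {n i : ℕ} (h1 : 1 ≤ i) (h2 : i ≤ n) :
    pochK (q ^ (-(∑ t ∈ Icc i (n+1), w t : ℤ))) (w i) /
      (qfac (∑ t ∈ Icc i (n+1), w t) *
        pochK (q ^ (-(∑ t ∈ Icc 1 (i-1), w t : ℤ))) (∑ t ∈ Icc 1 (i-1), w t))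
    = (pochK (q ^ (-(∑ t ∈ Icc i n, w t : ℤ))) (w i) /
        (qfac (∑ t ∈ Icc i n, w t) *
          pochK (q ^ (-(∑ t ∈ Icc 1 (i-1), w t : ℤ))) (∑ t ∈ Icc 1 (i-1), w t)))
      * (q ^ (-((w i : ℤ) * w (n+1))) * qfac (∑ t ∈ Icc (i+1) n, w t)
          / qfac ((∑ t ∈ Icc (i+1) n, w t) + w (n+1))) := by
  have hk2 : w i ≤ ∑ t ∈ Icc i n, w t := le_sum_Icc h2
  have htop : ∑ t ∈ Icc i (n+1), w t = (∑ t ∈ Icc i n, w t) + w (n+1) :=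
    Finset.sum_Icc_succ_top (by omega) w
  have hk1 : w i ≤ ∑ t ∈ Icc i (n+1), w t := by omega
  have hsplit : ∑ t ∈ Icc i n, w t = w i + ∑ t ∈ Icc (i+1) n, w t := sum_Icc_split h2
  have hmk2 : (∑ t ∈ Icc i n, w t) - w i = ∑ t ∈ Icc (i+1) n, w t := by omega
  have hmk1 : (∑ t ∈ Icc i (n+1), w t) - w i = (∑ t ∈ Icc (i+1) n, w t) + w (n+1) := by omega
  have hD : pochK (q ^ (-(∑ t ∈ Icc 1 (i-1), w t : ℤ))) (∑ t ∈ Icc 1 (i-1), w t) ≠ 0 := by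
    rw [cast_sum_Icc]; exact pochA_ne_zero le_rfl
  rw [cast_sum_Icc w i (n+1), cast_sum_Icc w i n, pochA hk1, pochA hk2, hmk1, hmk2]
  have ee : ((w i).choose 2 : ℤ) - (w i) * ((∑ t ∈ Icc i (n+1), w t : ℕ) : ℤ)
      = (((w i).choose 2 : ℤ) - (w i) * ((∑ t ∈ Icc i n, w t : ℕ) : ℤ)) + (-((w i : ℤ) * w (n+1))) := by
    rw [htop]; push_cast; ring
  rw [ee, zpow_add₀ q_ne_zero]
  exact fieldaux1 _ _ _ _ _ _ _ _ (qfac_ne_zero _) (qfac_ne_zero _) (qfac_ne_zero _) hD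

lemma step_pair (w : ℕ → ℕ) {n i : ℕ} (h1 : 1 ≤ i) (h2 : i ≤ n) :
    (q ^ (-((w i : ℤ) * w (n+1))) * qfac (∑ t ∈ Icc (i+1) n, w t)
        / qfac ((∑ t ∈ Icc (i+1) n, w t) + w (n+1)))
      * (pochK (q ^ (-(∑ t ∈ Icc i n, w t : ℤ))) (w i) *
          pochK (q ^ ((∑ t ∈ Icc i n, w t) + 1)) (w (n+1)))
    = pochK (q ^ (-(∑ t ∈ Icc i (n+1), w t : ℤ))) (w i) := by
  have hk2 : w i ≤ ∑ t ∈ Icc i n, w t := le_sum_Icc h2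
  have htop : ∑ t ∈ Icc i (n+1), w t = (∑ t ∈ Icc i n, w t) + w (n+1) :=
    Finset.sum_Icc_succ_top (by omega) w
  have hk1 : w i ≤ ∑ t ∈ Icc i (n+1), w t := by omega
  have hsplit : ∑ t ∈ Icc i n, w t = w i + ∑ t ∈ Icc (i+1) n, w t := sum_Icc_split h2
  have hmk2 : (∑ t ∈ Icc i n, w t) - w i = ∑ t ∈ Icc (i+1) n, w t := by omega
  have hmk1 : (∑ t ∈ Icc i (n+1), w t) - w i = (∑ t ∈ Icc (i+1) n, w t) + w (n+1) := by omega
  rw [cast_sum_Icc w i (n+1), cast_sum_Icc w i n, pochA hk1, pochA hk2, hmk1, hmk2,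
    pochB]
  have ee : ((w i).choose 2 : ℤ) - (w i) * ((∑ t ∈ Icc i (n+1), w t : ℕ) : ℤ)
      = (((w i).choose 2 : ℤ) - (w i) * ((∑ t ∈ Icc i n, w t : ℕ) : ℤ)) + (-((w i : ℤ) * w (n+1))) := by
    rw [htop]; push_cast; ring
  rw [ee, zpow_add₀ q_ne_zero, htop]
  exact fieldaux2 _ _ _ _ _ _ _ (qfac_ne_zero _) (qfac_ne_zero _) (qfac_ne_zero _)

lemma pairset_succ (n : ℕ) :
    ((Icc 1 (n+1)) ×ˢ (Icc 1 (n+1))).filter (fun ij => ij.1 < ij.2)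
      = ((Icc 1 n) ×ˢ (Icc 1 n)).filter (fun ij => ij.1 < ij.2)
        ∪ (Icc 1 n).image (fun i => (i, n+1)) := by
  ext ⟨i, j⟩
  simp only [mem_filter, mem_product, mem_Icc, mem_union, mem_image, Prod.mk.injEq]
  constructor
  · rintro ⟨⟨⟨hi1, hi2⟩, hj1, hj2⟩, hij⟩
    by_cases hj : j = n+1
    · right; exact ⟨i, ⟨hi1, by omega⟩, rfl, hj.symm⟩
    · left; omega
  · rintro (⟨⟨⟨hi1, hi2⟩, hj1, hj2⟩, hij⟩ | ⟨a, ⟨ha1, ha2⟩, rfl, rfl⟩) <;> omega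

lemma expsum' (w : ℕ → ℕ) (n : ℕ) :
    ∑ i ∈ Icc 1 n, (((w i).choose 2 : ℤ) - (w i : ℤ) * ∑ t ∈ Icc i (n+1), w t)
      = ((∑ t ∈ Icc 1 n, w t).choose 2 : ℤ) - (∑ t ∈ Icc 1 n, w t : ℤ)^2
        - (∑ t ∈ Icc 1 n, w t : ℤ) * w (n+1) := by
  have h1 : ∀ i ∈ Icc 1 n, (((w i).choose 2 : ℤ) - (w i : ℤ) * ∑ t ∈ Icc i (n+1), w t)
      = (((w i).choose 2 : ℤ) - (w i : ℤ) * ∑ t ∈ Icc i n, w t) - (w i : ℤ) * w (n+1) := by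
    intro i hi
    rw [Finset.sum_Icc_succ_top (by simp at hi; omega : i ≤ n+1)]
    push_cast; ring
  rw [Finset.sum_congr rfl h1, Finset.sum_sub_distrib, expsum, ← Finset.sum_mul]

lemma final_alg (W u : ℕ) (PF : K) (hPF : PF ≠ 0) :
    (-1:K) ^ W * q ^ (-((W + 1).choose 2 : ℤ)) * qfac W / PF *
      ((-1:K) ^ W * q ^ ((W.choose 2 : ℤ) - (W:ℤ) ^ 2 - (W:ℤ) * u) * qfac (W + u) / qfac u *
        ((-1:K) ^ u * q ^ ((u.choose 2 : ℤ) - (u:ℤ) * u) * qfac u /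
          (qfac u * ((-1:K) ^ W * q ^ ((W.choose 2:ℤ) - (W:ℤ) * (W:ℤ)) * qfac W)))) =
    (-1:K) ^ (W + u) * q ^ (-((W + u + 1).choose 2 : ℤ)) * qfac (W + u) / (PF * qfac u) := by
  have key : (q:K) ^ (-((W + 1).choose 2 : ℤ)) * q ^ ((W.choose 2 : ℤ) - (W:ℤ) ^ 2 - (W:ℤ) * u)
      * q ^ ((u.choose 2 : ℤ) - (u:ℤ) * u)
      = q ^ (-((W + u + 1).choose 2 : ℤ)) * q ^ ((W.choose 2:ℤ) - (W:ℤ) * (W:ℤ)) := by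
    rw [← zpow_add₀ q_ne_zero, ← zpow_add₀ q_ne_zero, ← zpow_add₀ q_ne_zero]
    congr 1
    rw [choose_two_succ, choose_two_succ, choose_two_add]
    push_cast
    linear_combination two_mul_choose_two u
  rw [pow_add, div_mul_div_comm, div_mul_div_comm,
    div_eq_div_iff
      (mul_ne_zero hPF (mul_ne_zero (qfac_ne_zero u) (mul_ne_zero (qfac_ne_zero u) (mul_ne_zero (mul_ne_zero (pow_ne_zero _ (by norm_num : (-1:K) ≠ 0)) (zpow_ne_zero _ q_ne_zero)) (qfac_ne_zero W))))) (mul_ne_zero hPF (qfac_ne_zero u))]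
  linear_combination ((-1:K)^W*(-1)^W*(-1)^u*qfac W*qfac (W+u)*qfac u*qfac u*PF) * key


/-- For `n ≥ 1` and nonnegative integers `w₁, …, wₙ` with `w = w₁ + ⋯ + wₙ`:
`∏_{l=1}^n [(q^{-∑_{i=l}^n wᵢ})_{w_l} / ((q)_{∑_{i=l}^n wᵢ} (q^{-∑_{i=1}^{l-1} wᵢ})_{∑_{i=1}^{l-1} wᵢ})]
 · ∏_{1≤i<j≤n} (q^{-∑_{l=i}^{j-1} w_l})_{wᵢ} (q^{∑_{l=i}^{j-1} w_l + 1})_{wⱼ}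
 = (-1)^w q^{-C(w+1,2)} (q)_w / ((q)_{w₁}⋯(q)_{wₙ})`. -/
theorem qfactorial_product_identity (n : ℕ) (hn : 1 ≤ n) (w : ℕ → ℕ) :
    (∏ l ∈ Icc 1 n,
        pochK (q ^ (-(∑ t ∈ Icc l n, w t : ℤ))) (w l) /
          (qfac (∑ t ∈ Icc l n, w t) *
            pochK (q ^ (-(∑ t ∈ Icc 1 (l-1), w t : ℤ))) (∑ t ∈ Icc 1 (l-1), w t))) *
      ∏ ij ∈ ((Icc 1 n) ×ˢ (Icc 1 n)).filter (fun ij => ij.1 < ij.2),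
        pochK (q ^ (-(∑ t ∈ Icc ij.1 (ij.2 - 1), w t : ℤ))) (w ij.1) *
          pochK (q ^ ((∑ t ∈ Icc ij.1 (ij.2 - 1), w t) + 1)) (w ij.2) =
      (-1 : K) ^ (∑ t ∈ Icc 1 n, w t) *
        q ^ (-(Nat.choose ((∑ t ∈ Icc 1 n, w t) + 1) 2 : ℤ)) *
        qfac (∑ t ∈ Icc 1 n, w t) / ∏ t ∈ Icc 1 n, qfac (w t) := by
  induction n, hn using Nat.le_induction with
  | base =>
    have hset : ((Icc 1 1) ×ˢ (Icc 1 1)).filter (fun ij : ℕ × ℕ => ij.1 < ij.2) = ∅ := by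
      ext ⟨i, j⟩
      simp only [mem_filter, mem_product, mem_Icc, notMem_empty, iff_false, not_and]
      omega
    rw [hset, Finset.prod_empty, mul_one]
    simp only [Finset.Icc_self, Finset.prod_singleton, Finset.sum_singleton, Nat.sub_self]
    rw [Finset.Icc_eq_empty (by omega : ¬ (1:ℕ) ≤ 0),
      Finset.sum_empty, Finset.sum_empty, pochK_zero, mul_one, pochA le_rfl,
      Nat.sub_self, qfac_zero]
    have he : ((w 1).choose 2 : ℤ) - (w 1) * (w 1) = -(((w 1) + 1).choose 2 : ℤ) := by
      rw [choose_two_succ]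
      linear_combination two_mul_choose_two (w 1)
    rw [he]
    ring
  | succ n hn ih =>
    have h1n : (1:ℕ) ≤ n + 1 := by omega
    have hdisj : Disjoint (((Icc 1 n) ×ˢ (Icc 1 n)).filter (fun ij : ℕ × ℕ => ij.1 < ij.2))
        ((Icc 1 n).image (fun i => (i, n+1))) := by
      rw [Finset.disjoint_left]
      rintro ⟨i, j⟩ hm hm2
      simp only [mem_filter, mem_product, mem_Icc] at hm
      simp only [mem_image, Prod.mk.injEq] at hm2
      obtain ⟨a, ha, h1, h2⟩ := hm2
      omega
    rw [pairset_succ n, Finset.prod_union hdisj,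
      Finset.prod_image (fun x _ y _ h => (Prod.ext_iff.mp h).1),
      Finset.prod_Icc_succ_top h1n, Finset.sum_Icc_succ_top h1n w,
      Finset.prod_Icc_succ_top h1n (fun t => qfac (w t))]
    simp only [Nat.add_sub_cancel]
    have hterm : (∏ l ∈ Icc 1 n,
          (pochK (q ^ (-(∑ t ∈ Icc l (n+1), w t : ℤ))) (w l) /
            (qfac (∑ t ∈ Icc l (n+1), w t) *
              pochK (q ^ (-(∑ t ∈ Icc 1 (l-1), w t : ℤ))) (∑ t ∈ Icc 1 (l-1), w t))))
        = (∏ l ∈ Icc 1 n,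
            (pochK (q ^ (-(∑ t ∈ Icc l n, w t : ℤ))) (w l) /
              (qfac (∑ t ∈ Icc l n, w t) *
                pochK (q ^ (-(∑ t ∈ Icc 1 (l-1), w t : ℤ))) (∑ t ∈ Icc 1 (l-1), w t))))
          * ∏ l ∈ Icc 1 n, (q ^ (-((w l : ℤ) * w (n+1))) * qfac (∑ t ∈ Icc (l+1) n, w t)
              / qfac ((∑ t ∈ Icc (l+1) n, w t) + w (n+1))) := by
      rw [← Finset.prod_mul_distrib]
      refine Finset.prod_congr rfl (fun i hi => ?_)
      simp only [mem_Icc] at hi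
      exact step_term w hi.1 hi.2
    rw [hterm]
    have hpair : (∏ l ∈ Icc 1 n, (q ^ (-((w l : ℤ) * w (n+1))) * qfac (∑ t ∈ Icc (l+1) n, w t)
              / qfac ((∑ t ∈ Icc (l+1) n, w t) + w (n+1))))
          * (∏ i ∈ Icc 1 n, (pochK (q ^ (-(∑ t ∈ Icc i n, w t : ℤ))) (w i) *
              pochK (q ^ ((∑ t ∈ Icc i n, w t) + 1)) (w (n+1))))
        = ∏ i ∈ Icc 1 n, pochK (q ^ (-(∑ t ∈ Icc i (n+1), w t : ℤ))) (w i) := by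
      rw [← Finset.prod_mul_distrib]
      refine Finset.prod_congr rfl (fun i hi => ?_)
      simp only [mem_Icc] at hi
      exact step_pair w hi.1 hi.2
    have rearr : ∀ a b c d e : K, ((a*b)*c)*(d*e) = (a*d) * ((b*e)*c) := by intros; ring
    rw [rearr, ih, hpair, prod_poch_suffix w (n+1) n (by omega), expsum' w n]
    simp only [Finset.Icc_self, Finset.sum_singleton]
    rw [Finset.sum_Icc_succ_top h1n w, cast_sum_Icc w 1 n,
      pochA (le_refl (w (n+1))), pochA (le_refl (∑ t ∈ Icc 1 n, w t))]
    simp only [Nat.sub_self, qfac_zero, div_one]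
    set W := ∑ t ∈ Icc 1 n, w t with hW
    set u := w (n+1) with hu
    set PF := ∏ t ∈ Icc 1 n, qfac (w t) with hPF
    exact final_alg W u PF (Finset.prod_ne_zero_iff.mpr fun t _ => qfac_ne_zero _)


end
end
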